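/- Gradient bound for the magnetic S-kernel: for every ω ∈ ℝ³ with |ω| = 1 and every i ∈ {1,2,3}, the function v ↦ (ω × v̂)ᵢ / (1 + v̂·ω) is differentiable on ℝ³ and the Euclidean norm of its gradient with respect to v is at most 12 √(1 + |v|²) for every v ∈ ℝ³. -/

import Mathlib

open MeasureTheory Set

noncomputable section

/-- Physical space `ℝ³`, realized as functions `Fin 3 → ℝ`. -/
abbrev V3 : Type := Fin 3 → ℝ

/-- Euclidean inner product on `ℝ³`. -/
def dot3 (a b : V3) : ℝ := a 0 * b 0 + a 1 * b 1 + a 2 * b 2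

/-- Euclidean norm on `ℝ³`. -/
def enorm3 (a : V3) : ℝ := Real.sqrt (dot3 a a)

/-- Cross product on `ℝ³`. -/
def cross3 (a b : V3) : V3 :=
  ![a 1 * b 2 - a 2 * b 1, a 2 * b 0 - a 0 * b 2, a 0 * b 1 - a 1 * b 0]

/-- `⟨v⟩ = √(1 + |v|²)`. -/
def jap (v : V3) : ℝ := Real.sqrt (1 + dot3 v v)

/-- Relativistic velocity `v̂ = v / ⟨v⟩`. -/
def vhat (v : V3) : V3 := (jap v)⁻¹ • v

/-- The open upper half space `Ω = {x ∈ ℝ³ : x₃ > 0}`. -/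
def halfSpace : Set V3 := {x : V3 | 0 < x 2}

/-- Embedding of the boundary `∂Ω ≃ ℝ²` into `ℝ³`. -/
def bdryPt (y : ℝ × ℝ) : V3 := ![y.1, y.2, 0]

/-- Projection `(x₁,x₂,x₃) ↦ (x₁,x₂,0)` onto the boundary. -/
def proj0 (x : V3) : V3 := ![x 0, x 1, 0]

/-- Reflection `x̄ = (x₁,x₂,−x₃)`. -/
def refl3 (x : V3) : V3 := ![x 0, x 1, -(x 2)]

/-- Time derivative `∂ₜ` of a space-time function. -/
def pdt (f : ℝ × V3 → ℝ) : ℝ × V3 → ℝ := fun q => fderiv ℝ f q (1, 0)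

/-- Spatial partial derivative `∂_{xᵢ}` of a space-time function. -/
def pdx (i : Fin 3) (f : ℝ × V3 → ℝ) : ℝ × V3 → ℝ := fun q => fderiv ℝ f q (0, Pi.single i 1)

/-- Partial derivative `∂_{xᵢ}` of a function on `ℝ³`. -/
def sdx (i : Fin 3) (u : V3 → ℝ) : V3 → ℝ := fun x => fderiv ℝ u x (Pi.single i 1)

/-- `i`-th component of a space-time vector field. -/
def comp3 (F : ℝ × V3 → V3) (i : Fin 3) : ℝ × V3 → ℝ := fun q => F q i

/-- Spatial divergence of a space-time vector field. -/
def divX (F : ℝ × V3 → V3) (q : ℝ × V3) : ℝ := ∑ i : Fin 3, pdx i (comp3 F i) q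

/-- Spatial curl of a space-time vector field. -/
def curlX (F : ℝ × V3 → V3) (q : ℝ × V3) : V3 :=
  ![pdx 1 (comp3 F 2) q - pdx 2 (comp3 F 1) q,
    pdx 2 (comp3 F 0) q - pdx 0 (comp3 F 2) q,
    pdx 0 (comp3 F 1) q - pdx 1 (comp3 F 0) q]

/-- Curl of a vector field on `ℝ³`. -/
def curlS (F : V3 → V3) (x : V3) : V3 :=
  ![sdx 1 (fun z => F z 2) x - sdx 2 (fun z => F z 1) x,
    sdx 2 (fun z => F z 0) x - sdx 0 (fun z => F z 2) x,
    sdx 0 (fun z => F z 1) x - sdx 1 (fun z => F z 0) x]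

/-- Divergence of a vector field on `ℝ³`. -/
def divS (F : V3 → V3) (x : V3) : ℝ := ∑ i : Fin 3, sdx i (fun z => F z i) x

/-- Spatial Laplacian of a space-time function. -/
def lapST (f : ℝ × V3 → ℝ) (q : ℝ × V3) : ℝ := ∑ i : Fin 3, pdx i (pdx i f) q

/-- Laplacian of a function on `ℝ³`. -/
def lapS (u : V3 → ℝ) (x : V3) : ℝ := ∑ i : Fin 3, sdx i (sdx i u) x

/-- Open space-time domain `(0,T) × Ω`. -/
def stDom (T : ℝ) : Set (ℝ × V3) := Ioo (0 : ℝ) T ×ˢ halfSpace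

/-- Closed space-time domain `[0,T] × Ω̄`. -/
def stDomCl (T : ℝ) : Set (ℝ × V3) := Icc (0 : ℝ) T ×ˢ closure halfSpace

/-- Lateral boundary domain `(0,T) × ∂Ω`, with `∂Ω ≃ ℝ²`. -/
def bDom (T : ℝ) : Set (ℝ × (ℝ × ℝ)) := Ioo (0 : ℝ) T ×ˢ (univ : Set (ℝ × ℝ))


section MSKhelpers

lemma mskdot3_self_nonneg (a : V3) : 0 ≤ dot3 a a := by
  unfold dot3; nlinarith [sq_nonneg (a 0), sq_nonneg (a 1), sq_nonneg (a 2)]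

lemma mskcauchy_sq (a b : V3) : (dot3 a b)^2 ≤ dot3 a a * dot3 b b := by
  unfold dot3
  nlinarith [sq_nonneg (a 0 * b 1 - a 1 * b 0), sq_nonneg (a 0 * b 2 - a 2 * b 0),
    sq_nonneg (a 1 * b 2 - a 2 * b 1)]

lemma mskabs_dot3_le (a b : V3) : |dot3 a b| ≤ enorm3 a * enorm3 b := by
  unfold enorm3
  rw [← Real.sqrt_mul (mskdot3_self_nonneg a)]
  exact Real.abs_le_sqrt (by simpa [sq] using mskcauchy_sq a b)

lemma mskenorm3_le_of_sq_le {a : V3} {x : ℝ} (hx : 0 ≤ x) (h : dot3 a a ≤ x^2) :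
    enorm3 a ≤ x := by
  unfold enorm3
  calc Real.sqrt (dot3 a a) ≤ Real.sqrt (x^2) := Real.sqrt_le_sqrt h
  _ = x := by rw [Real.sqrt_sq hx]

lemma mskenorm3_sq (a : V3) : enorm3 a ^ 2 = dot3 a a := Real.sq_sqrt (mskdot3_self_nonneg a)

lemma mskenorm3_add_le (a b : V3) : enorm3 (fun j => a j + b j) ≤ enorm3 a + enorm3 b := by
  have h1 : dot3 a b ≤ enorm3 a * enorm3 b := le_trans (le_abs_self _) (mskabs_dot3_le a b)
  have ha : 0 ≤ enorm3 a := Real.sqrt_nonneg _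
  have hb : 0 ≤ enorm3 b := Real.sqrt_nonneg _
  have haa := mskenorm3_sq a
  have hbb := mskenorm3_sq b
  apply mskenorm3_le_of_sq_le (by positivity)
  simp only [dot3] at *
  nlinarith [h1]

lemma mskcross_rep (ω w : V3) (i : Fin 3) :
    cross3 ω w i = dot3 w (cross3 (Pi.single i 1) ω) := by
  fin_cases i <;> simp [cross3, dot3, Pi.single_apply] <;> ring

lemma mskcross_comp_sq (a b : V3) (i : Fin 3) :
    (cross3 a b i)^2 ≤ dot3 a a * dot3 b b - (dot3 a b)^2 := by
  fin_cases i <;> simp [cross3, dot3] <;>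
    nlinarith [sq_nonneg (a 0 * b 1 - a 1 * b 0), sq_nonneg (a 0 * b 2 - a 2 * b 0),
      sq_nonneg (a 1 * b 2 - a 2 * b 1)]

lemma mskdot3_scale (t : ℝ) (a : V3) :
    dot3 (fun j => t * a j) (fun j => t * a j) = t^2 * dot3 a a := by
  simp only [dot3]; ring

lemma mskkey (c ω v : V3) (hden : Real.sqrt (1 + dot3 v v) + dot3 v ω ≠ 0) :
    ∃ D : V3 →L[ℝ] ℝ,
      HasFDerivAt (fun w => dot3 w c / (Real.sqrt (1 + dot3 w w) + dot3 w ω)) D v ∧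
      ∀ k : Fin 3, D (Pi.single k 1)
        = ((Real.sqrt (1 + dot3 v v) + dot3 v ω) * c k
           - dot3 v c * (v k / Real.sqrt (1 + dot3 v v) + ω k))
          / (Real.sqrt (1 + dot3 v v) + dot3 v ω)^2 := by
  have hn1 : (0:ℝ) < 1 + dot3 v v := by
    unfold dot3; nlinarith [sq_nonneg (v 0), sq_nonneg (v 1), sq_nonneg (v 2)]
  have hs0 : (0:ℝ) < Real.sqrt (1 + dot3 v v) := Real.sqrt_pos.mpr hn1
  set P : Fin 3 → (V3 →L[ℝ] ℝ) := fun j => ContinuousLinearMap.proj j with hP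
  have hp : ∀ (j : Fin 3), HasFDerivAt (fun z : V3 => z j) (P j) v :=
    fun j => (ContinuousLinearMap.proj (R := ℝ) (φ := fun _ : Fin 3 => ℝ) j).hasFDerivAt
  have hdotc : ∀ b : V3, HasFDerivAt (fun z : V3 => dot3 z b)
      (b 0 • P 0 + b 1 • P 1 + b 2 • P 2) v := by
    intro b
    exact (((hp 0).mul_const (b 0)).add ((hp 1).mul_const (b 1))).add ((hp 2).mul_const (b 2))
  have hnn : HasFDerivAt (fun z : V3 => 1 + dot3 z z)
      ((2 * v 0) • P 0 + (2 * v 1) • P 1 + (2 * v 2) • P 2) v := by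
    have h := ((((hp 0).mul (hp 0)).add ((hp 1).mul (hp 1))).add
      ((hp 2).mul (hp 2))).const_add 1
    refine h.congr_fderiv ?_
    ext w
    simp only [ContinuousLinearMap.add_apply, ContinuousLinearMap.smul_apply,
      ContinuousLinearMap.proj_apply, smul_eq_mul, hP]
    ring
  have hsq : HasFDerivAt (fun z : V3 => Real.sqrt (1 + dot3 z z))
      ((v 0 / Real.sqrt (1 + dot3 v v)) • P 0 + (v 1 / Real.sqrt (1 + dot3 v v)) • P 1
        + (v 2 / Real.sqrt (1 + dot3 v v)) • P 2) v := by
    have h := (Real.hasDerivAt_sqrt hn1.ne').comp_hasFDerivAt v hnn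
    refine h.congr_fderiv ?_
    ext w
    simp only [ContinuousLinearMap.add_apply, ContinuousLinearMap.smul_apply,
      ContinuousLinearMap.proj_apply, smul_eq_mul, hP]
    field_simp
  have hden' := hsq.add (hdotc ω)
  have hinv := (hasDerivAt_inv hden).comp_hasFDerivAt v hden'
  have hf0 := (hdotc c).mul hinv
  have hf : HasFDerivAt (fun w => dot3 w c / (Real.sqrt (1 + dot3 w w) + dot3 w ω))
      ((((Real.sqrt (1 + dot3 v v) + dot3 v ω) * c 0
           - dot3 v c * (v 0 / Real.sqrt (1 + dot3 v v) + ω 0))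
          / (Real.sqrt (1 + dot3 v v) + dot3 v ω)^2) • P 0
       + (((Real.sqrt (1 + dot3 v v) + dot3 v ω) * c 1
           - dot3 v c * (v 1 / Real.sqrt (1 + dot3 v v) + ω 1))
          / (Real.sqrt (1 + dot3 v v) + dot3 v ω)^2) • P 1
       + (((Real.sqrt (1 + dot3 v v) + dot3 v ω) * c 2
           - dot3 v c * (v 2 / Real.sqrt (1 + dot3 v v) + ω 2))
          / (Real.sqrt (1 + dot3 v v) + dot3 v ω)^2) • P 2) v := by
    have heq : (fun w : V3 => dot3 w c / (Real.sqrt (1 + dot3 w w) + dot3 w ω))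
        = fun w : V3 => dot3 w c * (Real.sqrt (1 + dot3 w w) + dot3 w ω)⁻¹ := by
      funext w; rw [div_eq_mul_inv]
    rw [heq]
    refine hf0.congr_fderiv ?_
    ext w
    simp only [ContinuousLinearMap.add_apply, ContinuousLinearMap.smul_apply,
      ContinuousLinearMap.proj_apply, smul_eq_mul, Function.comp_apply, hP,
      ContinuousLinearMap.coe_smul', Pi.smul_apply, ContinuousLinearMap.coe_add',
      Pi.add_apply, ContinuousLinearMap.neg_apply, smul_neg]
    field_simp
    ring
  refine ⟨_, hf, ?_⟩
  intro k
  fin_cases k <;> simp [hP, Pi.single_apply]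

end MSKhelpers

set_option maxHeartbeats 1000000 in
/-- gradient bound for the magnetic S-kernel. -/
theorem magnetic_S_kernel_gradient_bound (ω : V3) (hω : enorm3 ω = 1) (i : Fin 3) :
    (∀ v : V3,
      DifferentiableAt ℝ (fun w => cross3 ω (vhat w) i / (1 + dot3 (vhat w) ω)) v) ∧
    (∀ v : V3,
      enorm3 (fun j =>
          fderiv ℝ (fun w => cross3 ω (vhat w) i / (1 + dot3 (vhat w) ω)) v (Pi.single j 1))
        ≤ 12 * Real.sqrt (1 + dot3 v v)) := by
  set c : V3 := cross3 (Pi.single i 1) ω with hc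
  have hωω : dot3 ω ω = 1 := by
    have h := mskenorm3_sq ω
    rw [hω] at h; linarith [h.symm]
  -- basic per-point facts
  have hn1 : ∀ v : V3, (0:ℝ) < 1 + dot3 v v := by
    intro v
    unfold dot3; nlinarith [sq_nonneg (v 0), sq_nonneg (v 1), sq_nonneg (v 2)]
  have hs0 : ∀ v : V3, (0:ℝ) < Real.sqrt (1 + dot3 v v) :=
    fun v => Real.sqrt_pos.mpr (hn1 v)
  have hs2 : ∀ v : V3, Real.sqrt (1 + dot3 v v) ^ 2 = 1 + dot3 v v :=
    fun v => Real.sq_sqrt (hn1 v).le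
  have habsm : ∀ v : V3, |dot3 v ω| ≤ enorm3 v := by
    intro v
    have := mskabs_dot3_le v ω
    rwa [hω, mul_one] at this
  have hvs : ∀ v : V3, enorm3 v < Real.sqrt (1 + dot3 v v) := by
    intro v
    have h1 := mskenorm3_sq v
    have h2 := hs2 v
    have h3 : (0:ℝ) ≤ enorm3 v := Real.sqrt_nonneg _
    nlinarith [hs0 v]
  have hdlb : ∀ v : V3,
      1 / (2 * Real.sqrt (1 + dot3 v v)) ≤ Real.sqrt (1 + dot3 v v) + dot3 v ω := by
    intro v
    have h1 := mskenorm3_sq v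
    have h2 := hs2 v
    have h3 : (0:ℝ) ≤ enorm3 v := Real.sqrt_nonneg _
    have h4 := hvs v
    have h5 := abs_le.mp (habsm v)
    rw [div_le_iff₀ (mul_pos two_pos (hs0 v))]
    nlinarith [hs0 v]
  have hdpos : ∀ v : V3, (0:ℝ) < Real.sqrt (1 + dot3 v v) + dot3 v ω := by
    intro v
    have h1 : (0:ℝ) < 1 / (2 * Real.sqrt (1 + dot3 v v)) :=
      one_div_pos.mpr (mul_pos two_pos (hs0 v))
    linarith [hdlb v]
  -- rewrite the kernel in simplified form
  have hfun : (fun w => cross3 ω (vhat w) i / (1 + dot3 (vhat w) ω))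
      = fun w => dot3 w c / (Real.sqrt (1 + dot3 w w) + dot3 w ω) := by
    funext w
    have ht0 := hs0 w
    have hdw := hdpos w
    have h3 : cross3 ω (vhat w) i = dot3 (vhat w) c := mskcross_rep ω (vhat w) i
    have h1 : dot3 (vhat w) c = (Real.sqrt (1 + dot3 w w))⁻¹ * dot3 w c := by
      simp only [vhat, jap, dot3, Pi.smul_apply, smul_eq_mul]
      ring
    have h2 : dot3 (vhat w) ω = (Real.sqrt (1 + dot3 w w))⁻¹ * dot3 w ω := by
      simp only [vhat, jap, dot3, Pi.smul_apply, smul_eq_mul]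
      ring
    rw [h3, h1, h2]
    have hne1 : (1:ℝ) + (Real.sqrt (1 + dot3 w w))⁻¹ * dot3 w ω ≠ 0 := by
      have h : (1:ℝ) + (Real.sqrt (1 + dot3 w w))⁻¹ * dot3 w ω
          = (Real.sqrt (1 + dot3 w w) + dot3 w ω) / Real.sqrt (1 + dot3 w w) := by
        field_simp
      rw [h]; exact (div_pos hdw ht0).ne'
    rw [div_eq_div_iff hne1 hdw.ne']
    field_simp
  rw [hfun]
  constructor
  · intro v
    obtain ⟨D, hD, _⟩ := mskkey c ω v (hdpos v).ne'
    exact hD.differentiableAt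
  · intro v
    obtain ⟨D, hD, hval⟩ := mskkey c ω v (hdpos v).ne'
    have hcc : dot3 c c ≤ 1 := by
      rw [hc]
      fin_cases i <;>
        · simp [cross3, dot3, Pi.single_apply]
          nlinarith [hωω, mul_self_nonneg (ω 0), mul_self_nonneg (ω 1), mul_self_nonneg (ω 2),
            (show dot3 ω ω = ω 0 * ω 0 + ω 1 * ω 1 + ω 2 * ω 2 from rfl)]
    have hrep : cross3 ω v i = dot3 v c := by
      rw [hc]; exact mskcross_rep ω v i
    have hcross := mskcross_comp_sq ω v i
    have hmsym : dot3 ω v = dot3 v ω := by simp only [dot3]; ring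
    have h4 : Real.sqrt (1 + dot3 v v) ^ 2 = 1 + dot3 v v := hs2 v
    have h5 := abs_le.mp (habsm v)
    have h6 := hvs v
    have hev2 := mskenorm3_sq v
    have hev0 : (0:ℝ) ≤ enorm3 v := Real.sqrt_nonneg _
    have hdlbv := hdlb v
    have hspos := hs0 v
    have hden0 := hdpos v
    set s : ℝ := Real.sqrt (1 + dot3 v v) with hsdef
    set m : ℝ := dot3 v ω with hmdef
    set den : ℝ := s + m with hddef
    set num : ℝ := dot3 v c with hnumdef
    clear_value num den m s
    have hnum2 : num^2 ≤ 2 * s * den := by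
      rw [hrep, hmsym, hωω, one_mul] at hcross
      nlinarith [hcross, sq_nonneg (s + m), hspos, hden0, h4, hddef]
    have hG : (fun j => fderiv ℝ
          (fun w => dot3 w c / (Real.sqrt (1 + dot3 w w) + dot3 w ω)) v (Pi.single j 1))
        = fun j => (den * c j - num * (v j / s + ω j)) / den^2 := by
      funext j
      rw [hD.fderiv]
      exact hval j
    rw [hG]
    -- decompose into two pieces
    have hsplit : (fun j => (den * c j - num * (v j / s + ω j)) / den^2)
        = fun j => (1/den) * c j + (-(num/den^2)) * (v j / s + ω j) := by
      funext j
      field_simp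
      ring
    rw [hsplit]
    -- scalar bounds
    have hA : enorm3 (fun j => (1/den) * c j) ≤ 1/den := by
      apply mskenorm3_le_of_sq_le (one_div_pos.mpr hden0).le
      have hAA : dot3 (fun j => (1/den) * c j) (fun j => (1/den) * c j)
          = (1/den)^2 * dot3 c c := by
        simp only [dot3]; ring
      rw [hAA]
      nlinarith [hcc, sq_nonneg (1/den)]
    have hQ0 : 0 ≤ dot3 (fun j => v j / s + ω j) (fun j => v j / s + ω j) :=
      mskdot3_self_nonneg _
    have hQ : dot3 (fun j => v j / s + ω j) (fun j => v j / s + ω j) ≤ 2 * den / s := by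
      have hQs : dot3 (fun j => v j / s + ω j) (fun j => v j / s + ω j) * s^2
          = dot3 v v + 2 * s * m + s^2 * dot3 ω ω := by
        rw [hmdef]
        simp only [dot3]
        field_simp
        ring
      rw [le_div_iff₀ hspos]
      nlinarith [hQs, hspos, h4, hωω, hddef]
    have hB : enorm3 (fun j => (-(num/den^2)) * (v j / s + ω j)) ≤ 2/den := by
      apply mskenorm3_le_of_sq_le (div_pos two_pos hden0).le
      have hBB : dot3 (fun j => (-(num/den^2)) * (v j / s + ω j))
          (fun j => (-(num/den^2)) * (v j / s + ω j))
          = (num/den^2)^2 * dot3 (fun j => v j / s + ω j) (fun j => v j / s + ω j) := by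
        simp only [dot3]; ring
      rw [hBB]
      have h1 : num^2 * dot3 (fun j => v j / s + ω j) (fun j => v j / s + ω j)
          ≤ 4 * den^2 := by
        calc num^2 * dot3 (fun j => v j / s + ω j) (fun j => v j / s + ω j)
            ≤ (2 * s * den) * (2 * den / s) :=
              mul_le_mul hnum2 hQ hQ0
                (by nlinarith [hspos, hden0])
          _ = 4 * den^2 := by field_simp; ring
      have e1 : (num/den^2)^2 * dot3 (fun j => v j / s + ω j) (fun j => v j / s + ω j)
          = num^2 * dot3 (fun j => v j / s + ω j) (fun j => v j / s + ω j) / den^4 := by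
        ring
      have e2 : (2/den)^2 = 4 * den^2 / den^4 := by
        rw [div_pow]
        rw [div_eq_div_iff (pow_ne_zero 2 hden0.ne') (pow_ne_zero 4 hden0.ne')]
        ring
      rw [e1, e2]
      exact (div_le_div_iff_of_pos_right (pow_pos hden0 4)).mpr h1
    calc enorm3 (fun j => (1/den) * c j + (-(num/den^2)) * (v j / s + ω j))
        ≤ enorm3 (fun j => (1/den) * c j)
          + enorm3 (fun j => (-(num/den^2)) * (v j / s + ω j)) := mskenorm3_add_le _ _
      _ ≤ 1/den + 2/den := add_le_add hA hB
      _ ≤ 12 * s := by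
          rw [← add_div, div_le_iff₀ hden0]
          have h12 : 1 ≤ den * (2 * s) := (div_le_iff₀ (mul_pos two_pos hspos)).mp hdlbv
          nlinarith [hspos, hden0, h12]
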